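/- arXiv:1803.00139 — 3 statements merged into one kernel-verified Lean document; each statement's English description precedes it below -/
import Mathlib

section
/- Let a_{kj}, b_k (k,j = 1,…,r) be real numbers satisfying b_k b_j − b_k a_{kj} − b_j a_{jk} = 0 for all k,j. Let S be a symmetric bilinear form on R^n. If vectors Z_k, Y_k, z⁰, z¹ ∈ R^n and τ > 0 satisfy Z_k = z⁰ + τ Σ_j a_{kj} Y_j and z¹ = z⁰ + τ Σ_k b_k Y_k, then S(z¹, z¹) − S(z⁰, z⁰) = 2τ Σ_k b_k S(Z_k, Y_k). -/
open Finset

theorem rk_symplectic_quadratic_identity {n r : ℕ}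
    (S : (Fin n → ℝ) →ₗ[ℝ] (Fin n → ℝ) →ₗ[ℝ] ℝ)
    (hS : ∀ u v, S u v = S v u)
    (a : Fin r → Fin r → ℝ) (b : Fin r → ℝ)
    (hab : ∀ k j, b k * b j - b k * a k j - b j * a j k = 0)
    (Z Y : Fin r → (Fin n → ℝ)) (z0 z1 : Fin n → ℝ) (τ : ℝ) (hτ : 0 < τ)
    (hZ : ∀ k, Z k = z0 + τ • ∑ j, a k j • Y j)
    (hz1 : z1 = z0 + τ • ∑ k, b k • Y k) :
    S z1 z1 - S z0 z0 = 2 * τ * ∑ k, b k * S (Z k) (Y k) := by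
  have hSZ : ∀ k, S (Z k) (Y k) = S z0 (Y k) + τ * ∑ j, a k j * S (Y j) (Y k) := by
    intro k
    rw [hZ k]
    simp [map_add, map_smul, map_sum, LinearMap.add_apply, LinearMap.smul_apply,
      LinearMap.sum_apply, smul_eq_mul, Finset.mul_sum]
  subst hz1
  simp only [map_add, map_smul, map_sum, LinearMap.add_apply, LinearMap.smul_apply,
    LinearMap.sum_apply, smul_eq_mul, hSZ, Finset.mul_sum, Finset.sum_add_distrib]
  have hsym : ∀ i, S (Y i) z0 = S z0 (Y i) := fun i => hS _ _
  simp only [hsym]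
  have key : ∑ i, ∑ j, b i * b j * S (Y j) (Y i)
      = 2 * ∑ i, ∑ j, b i * a i j * S (Y j) (Y i) := by
    have h1 : ∑ i, ∑ j, b j * a j i * S (Y j) (Y i)
        = ∑ i, ∑ j, b i * a i j * S (Y j) (Y i) := by
      rw [Finset.sum_comm]
      exact Finset.sum_congr rfl fun i _ => Finset.sum_congr rfl fun j _ => by rw [hS]
    calc ∑ i, ∑ j, b i * b j * S (Y j) (Y i)
        = ∑ i, ∑ j, (b i * a i j * S (Y j) (Y i) + b j * a j i * S (Y j) (Y i)) := by
          refine Finset.sum_congr rfl fun i _ => Finset.sum_congr rfl fun j _ => ?_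
          linear_combination (S (Y j)) (Y i) * hab i j
      _ = ∑ i, ∑ j, b i * a i j * S (Y j) (Y i) + ∑ i, ∑ j, b j * a j i * S (Y j) (Y i) := by
          simp [Finset.sum_add_distrib]
      _ = 2 * ∑ i, ∑ j, b i * a i j * S (Y j) (Y i) := by rw [h1]; ring
  have hB : (∑ i, τ * (b i * (S z0 (Y i) + ∑ j, τ * (b j * S (Y j) (Y i)))))
      = (∑ i, τ * (b i * S z0 (Y i))) + τ^2 * ∑ i, ∑ j, b i * b j * S (Y j) (Y i) := by
    rw [Finset.mul_sum, ← Finset.sum_add_distrib]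
    refine Finset.sum_congr rfl fun i _ => ?_
    rw [mul_add, mul_add, Finset.mul_sum, Finset.mul_sum, Finset.mul_sum]
    congr 1
    exact Finset.sum_congr rfl fun j _ => by ring
  have hC : (∑ i, 2 * τ * (b i * (S z0 (Y i) + ∑ j, τ * (a i j * S (Y j) (Y i)))))
      = 2 * (∑ i, τ * (b i * S z0 (Y i))) + 2 * τ^2 * ∑ i, ∑ j, b i * a i j * S (Y j) (Y i) := by
    rw [Finset.mul_sum, Finset.mul_sum, ← Finset.sum_add_distrib]
    refine Finset.sum_congr rfl fun i _ => ?_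
    rw [mul_add, mul_add, Finset.mul_sum, Finset.mul_sum, Finset.mul_sum]
    rw [show (2:ℝ) * τ * (b i * S z0 (Y i)) = 2 * (τ * (b i * S z0 (Y i))) from by ring]
    congr 1
    exact Finset.sum_congr rfl fun j _ => by ring
  rw [hB, hC]
  linear_combination τ^2 * key
end

section
/- Let a_{kj}, b_k satisfy the symplecticity condition b_k b_j − b_k a_{kj} − b_j a_{jk} = 0 for all k,j = 1,…,r, and let K be a skew-symmetric n×n real matrix. Suppose dz_k, dY_k, dz⁰, dz¹ ∈ R^n satisfy dz_k = dz⁰ + τ Σ_j a_{kj} dY_j and dz¹ = dz⁰ + τ Σ_k b_k dY_k. Then ω(dz¹, dz¹') − ω(dz⁰, dz⁰') for two solutions of these relations satisfies: (dz¹)ᵀ K (dz¹)' = (dz⁰)ᵀ K (dz⁰)' + τ Σ_k b_k [ (dz_k)ᵀ K (dY_k)' + (dY_k)ᵀ K (dz_k)' ], where primed quantities satisfy the same recurrences. -/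
open Matrix Finset

theorem rk_multisymplectic_step {n r : ℕ}
    (K : Matrix (Fin n) (Fin n) ℝ) (hK : Kᵀ = -K)
    (a : Fin r → Fin r → ℝ) (b : Fin r → ℝ)
    (hab : ∀ k j, b k * b j - b k * a k j - b j * a j k = 0)
    (τ : ℝ)
    (dz dY dz' dY' : Fin r → (Fin n → ℝ)) (dz0 dz1 dz0' dz1' : Fin n → ℝ)
    (hdz : ∀ k, dz k = dz0 + τ • ∑ j, a k j • dY j)
    (hdz1 : dz1 = dz0 + τ • ∑ k, b k • dY k)
    (hdz' : ∀ k, dz' k = dz0' + τ • ∑ j, a k j • dY' j)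
    (hdz1' : dz1' = dz0' + τ • ∑ k, b k • dY' k) :
    dz1 ⬝ᵥ K.mulVec dz1' =
      dz0 ⬝ᵥ K.mulVec dz0' +
        τ * ∑ k, b k * (dz k ⬝ᵥ K.mulVec (dY' k) + dY k ⬝ᵥ K.mulVec (dz' k)) := by
  set B : (Fin n → ℝ) → (Fin n → ℝ) → ℝ := fun u v => u ⬝ᵥ K.mulVec v with hBdef
  have hB_addl : ∀ u v w, B (u + v) w = B u w + B v w := by
    intro u v w; simp [hBdef, add_dotProduct]
  have hB_addr : ∀ u v w, B u (v + w) = B u v + B u w := by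
    intro u v w; simp [hBdef, mulVec_add, dotProduct_add]
  have hB_smull : ∀ (c : ℝ) u v, B (c • u) v = c * B u v := by
    intro c u v; simp [hBdef, smul_dotProduct]
  have hB_smulr : ∀ (c : ℝ) u v, B u (c • v) = c * B u v := by
    intro c u v; simp [hBdef, mulVec_smul, dotProduct_smul]
  have hB_suml : ∀ (f : Fin r → Fin n → ℝ) v, B (∑ j, f j) v = ∑ j, B (f j) v := by
    intro f v
    simp only [hBdef, dotProduct, Finset.sum_apply, Finset.sum_mul]
    exact Finset.sum_comm
  have hmv : ∀ (f : Fin r → Fin n → ℝ), K.mulVec (∑ j, f j) = ∑ j, K.mulVec (f j) := by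
    intro f
    have := map_sum K.mulVecLin f Finset.univ
    simpa only [mulVecLin_apply] using this
  have hB_sumr : ∀ u (f : Fin r → Fin n → ℝ), B u (∑ j, f j) = ∑ j, B u (f j) := by
    intro u f
    simp only [hBdef, hmv]
    simp only [dotProduct, Finset.sum_apply, Finset.mul_sum]
    exact Finset.sum_comm
  show B dz1 dz1' = B dz0 dz0' + τ * ∑ k, b k * (B (dz k) (dY' k) + B (dY k) (dz' k))
  have hR : ∀ k, b k * (B (dz k) (dY' k) + B (dY k) (dz' k)) =
      b k * B dz0 (dY' k) + b k * B (dY k) dz0' +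
        τ * ∑ j, (b k * a k j * B (dY j) (dY' k) + b k * a k j * B (dY k) (dY' j)) := by
    intro k
    rw [hdz k, hdz' k]
    simp only [hB_addl, hB_addr, hB_smull, hB_smulr, hB_suml, hB_sumr,
      Finset.mul_sum, mul_add, add_mul, Finset.sum_add_distrib]
    ring_nf
  have hL : B dz1 dz1' = B dz0 dz0' + τ * ∑ k, b k * B dz0 (dY' k) +
      τ * ∑ k, b k * B (dY k) dz0' +
      τ * (τ * ∑ k, ∑ j, b k * b j * B (dY k) (dY' j)) := by
    rw [hdz1, hdz1']
    simp only [hB_addl, hB_addr, hB_smull, hB_smulr, hB_suml, hB_sumr,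
      Finset.mul_sum, mul_add, add_mul, Finset.sum_add_distrib]
    ring_nf
  have key : ∑ k, ∑ j, b k * b j * B (dY k) (dY' j) =
      ∑ k, ∑ j, (b k * a k j * B (dY j) (dY' k) + b k * a k j * B (dY k) (dY' j)) := by
    have e : ∀ k j, b k * b j * B (dY k) (dY' j) =
        b j * a j k * B (dY k) (dY' j) + b k * a k j * B (dY k) (dY' j) :=
      fun k j => by linear_combination B (dY k) (dY' j) * hab k j
    simp only [e, Finset.sum_add_distrib]
    congr 1
    exact Finset.sum_comm
  rw [hL, key]
  simp only [hR, Finset.mul_sum, Finset.sum_add_distrib, mul_add]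
  ring_nf
end

section
/- Let a_{kj}, b_k (k,j = 1,…,r) be real RK coefficients with b_k b_j − b_k a_{kj} − b_j a_{jk} = 0, let K be an invertible skew-symmetric n×n real matrix, and let A, B be symmetric n×n real matrices such that K⁻¹A and K⁻¹B are skew-symmetric. Suppose z⁰, z¹, Z_k ∈ R^n and τ > 0, ΔW ∈ ℝ satisfy Z_k = z⁰ + Σ_j a_{kj} (τ K⁻¹A Z_j + ΔW K⁻¹B Z_j) and z¹ = z⁰ + Σ_k b_k (τ K⁻¹A Z_k + ΔW K⁻¹B Z_k). Then |z¹|² = |z⁰|². -/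
open Matrix Finset

theorem stochastic_rk_norm_preservation {n r : ℕ}
    (K A B : Matrix (Fin n) (Fin n) ℝ)
    (hK : Kᵀ = -K) (hKinv : IsUnit K.det)
    (hA : Aᵀ = A) (hB : Bᵀ = B)
    (hKA : (K⁻¹ * A)ᵀ = -(K⁻¹ * A)) (hKB : (K⁻¹ * B)ᵀ = -(K⁻¹ * B))
    (a : Fin r → Fin r → ℝ) (b : Fin r → ℝ)
    (hab : ∀ k j, b k * b j - b k * a k j - b j * a j k = 0)
    (τ ΔW : ℝ) (hτ : 0 < τ)
    (z0 z1 : Fin n → ℝ) (Z : Fin r → (Fin n → ℝ))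
    (hZ : ∀ k, Z k = z0 + ∑ j, a k j •
      (τ • (K⁻¹ * A).mulVec (Z j) + ΔW • (K⁻¹ * B).mulVec (Z j)))
    (hz1 : z1 = z0 + ∑ k, b k •
      (τ • (K⁻¹ * A).mulVec (Z k) + ΔW • (K⁻¹ * B).mulVec (Z k))) :
    z1 ⬝ᵥ z1 = z0 ⬝ᵥ z0 := by
  set L : Matrix (Fin n) (Fin n) ℝ := τ • (K⁻¹ * A) + ΔW • (K⁻¹ * B) with hL
  have hLskew : Lᵀ = -L := by
    rw [hL, transpose_add, transpose_smul, transpose_smul, hKA, hKB]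
    module
  set Y : Fin r → (Fin n → ℝ) := fun k => L.mulVec (Z k) with hY
  have hmv : ∀ v : Fin n → ℝ,
      τ • (K⁻¹ * A).mulVec v + ΔW • (K⁻¹ * B).mulVec v = L.mulVec v := by
    intro v; simp [hL, add_mulVec, smul_mulVec]
  have hZ' : ∀ k, Z k = z0 + ∑ j, a k j • Y j := by
    intro k; rw [hZ k]; simp only [hmv, hY]
  have hz1' : z1 = z0 + ∑ k, b k • Y k := by
    rw [hz1]; simp only [hmv, hY]
  -- dot product linearity over sums
  have sdot : ∀ (f : Fin r → Fin n → ℝ) (w : Fin n → ℝ),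
      (∑ i, f i) ⬝ᵥ w = ∑ i, f i ⬝ᵥ w := by
    intro f w
    simp only [dotProduct, Finset.sum_apply, Finset.sum_mul]
    exact Finset.sum_comm
  have dots : ∀ (w : Fin n → ℝ) (f : Fin r → Fin n → ℝ),
      w ⬝ᵥ (∑ i, f i) = ∑ i, w ⬝ᵥ f i := by
    intro w f
    simp only [dotProduct, Finset.sum_apply, Finset.mul_sum]
    exact Finset.sum_comm
  have hskew : ∀ v : Fin n → ℝ, v ⬝ᵥ L.mulVec v = 0 := by
    intro v
    have h1 : v ⬝ᵥ L.mulVec v = L.vecMul v ⬝ᵥ v := Matrix.dotProduct_mulVec v L v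
    have h2 : L.vecMul v = Lᵀ.mulVec v := by rw [Matrix.mulVec_transpose]
    rw [h2, hLskew] at h1
    simp only [Matrix.neg_mulVec, neg_dotProduct] at h1
    rw [dotProduct_comm (L.mulVec v) v] at h1
    linarith
  have hZY : ∀ k, z0 ⬝ᵥ Y k = - ∑ j, a k j * (Y j ⬝ᵥ Y k) := by
    intro k
    have h0 : Z k ⬝ᵥ Y k = 0 := hskew (Z k)
    have hz0 : z0 = Z k - ∑ j, a k j • Y j := by
      rw [hZ' k]; abel
    rw [hz0, sub_dotProduct, h0, sdot]
    simp only [smul_dotProduct, smul_eq_mul, zero_sub]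
  have hexp : z1 ⬝ᵥ z1 = z0 ⬝ᵥ z0 + 2 * (∑ k, b k * (z0 ⬝ᵥ Y k))
      + ∑ k, ∑ j, b k * b j * (Y k ⬝ᵥ Y j) := by
    rw [hz1', add_dotProduct, dotProduct_add, dotProduct_add,
      sdot, dots, dots]
    have e1 : ∀ k, z0 ⬝ᵥ b k • Y k = b k * (z0 ⬝ᵥ Y k) := by
      intro k; rw [dotProduct_smul]; rfl
    have e2 : ∀ k, (b k • Y k) ⬝ᵥ z0 = b k * (z0 ⬝ᵥ Y k) := by
      intro k; rw [smul_dotProduct, dotProduct_comm]; rfl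
    have e3 : ∀ i, (∑ k, b k • Y k) ⬝ᵥ (b i • Y i) = ∑ k, b k * b i * (Y k ⬝ᵥ Y i) := by
      intro i
      rw [sdot]
      refine Finset.sum_congr rfl fun k _ => ?_
      rw [smul_dotProduct, dotProduct_smul]
      simp only [smul_eq_mul]; ring
    simp only [e1, e2, e3]
    rw [Finset.sum_comm]
    ring
  rw [hexp]
  have hsym : ∀ k j, Y j ⬝ᵥ Y k = Y k ⬝ᵥ Y j := fun k j => dotProduct_comm _ _
  have h1 : ∑ k, b k * (z0 ⬝ᵥ Y k)
      = - ∑ k, ∑ j, b k * a k j * (Y k ⬝ᵥ Y j) := by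
    rw [← Finset.sum_neg_distrib]
    refine Finset.sum_congr rfl fun k _ => ?_
    rw [hZY k, mul_neg, Finset.mul_sum, ← Finset.sum_neg_distrib, ← Finset.sum_neg_distrib]
    refine Finset.sum_congr rfl fun j _ => ?_
    rw [hsym k j]; ring
  have h3 : ∑ k, ∑ j, b j * a j k * (Y k ⬝ᵥ Y j)
      = ∑ k, ∑ j, b k * a k j * (Y k ⬝ᵥ Y j) := by
    rw [Finset.sum_comm]
    refine Finset.sum_congr rfl fun k _ => Finset.sum_congr rfl fun j _ => ?_
    rw [hsym k j]
  have h2 : ∑ k, ∑ j, b k * b j * (Y k ⬝ᵥ Y j)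
      = ∑ k, ∑ j, b k * a k j * (Y k ⬝ᵥ Y j)
      + ∑ k, ∑ j, b j * a j k * (Y k ⬝ᵥ Y j) := by
    rw [← Finset.sum_add_distrib]
    refine Finset.sum_congr rfl fun k _ => ?_
    rw [← Finset.sum_add_distrib]
    refine Finset.sum_congr rfl fun j _ => ?_
    have hbb : b k * b j = b k * a k j + b j * a j k := by linarith [hab k j]
    rw [hbb, add_mul]
  rw [h1, h2, h3]
  ring
end
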